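/- arXiv:1112.6115 — 5 statements merged into one kernel-verified Lean document; each statement's English description precedes it below -/
import Mathlib

section
/- Let G be a nilpotent group that is not abelian. Then G contains a subgroup isomorphic to the discrete Heisenberg group, i.e. there exist elements f, g, h in G with h ≠ 1 such that [f,g] = h and h commutes with both f and g. -/
open scoped commutatorElement

/-- A nilpotent group that is not abelian contains a Heisenberg configuration:
elements `f`, `g`, `h` with `h ≠ 1`, `⁅f,g⁆ = h`, and `h` commuting with `f` and `g`. -/
theorem stmt_0 (G : Type*) [Group G] [Group.IsNilpotent G]
    (hna : ¬ ∀ a b : G, a * b = b * a) :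
    ∃ f g h : G, h ≠ 1 ∧ ⁅f, g⁆ = h ∧ Commute f h ∧ Commute g h := by
  classical
  have hex : ∃ n, Subgroup.lowerCentralSeries (⊤ : Subgroup G) n = ⊥ := Subgroup.nilpotent_iff_lowerCentralSeries.mp inferInstance
  set n := Nat.find hex with hn
  have hbot : Subgroup.lowerCentralSeries (⊤ : Subgroup G) n = ⊥ := Nat.find_spec hex
  -- n ≥ 2 since G is nontrivial and nonabelian
  have habelian : Subgroup.lowerCentralSeries (⊤ : Subgroup G) 1 ≠ ⊥ := by
    intro h1
    apply hna
    intro a b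
    have hmem : ⁅a, b⁆ ∈ Subgroup.lowerCentralSeries (⊤ : Subgroup G) 1 := by
      show ⁅a, b⁆ ∈ ⁅Subgroup.lowerCentralSeries (⊤ : Subgroup G) 0, ⊤⁆
      exact Subgroup.commutator_mem_commutator (Subgroup.mem_top a) (Subgroup.mem_top b)
    rw [h1, Subgroup.mem_bot, commutatorElement_eq_one_iff_commute] at hmem
    exact hmem
  have hn0 : n ≠ 0 := by
    intro h0
    apply habelian
    have : Subgroup.lowerCentralSeries (⊤ : Subgroup G) 0 = ⊥ := by rw [← h0]; exact hbot
    exact le_bot_iff.mp (this ▸ Subgroup.lowerCentralSeries_antitone ⊤ (Nat.zero_le 1))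
  clear_value n
  obtain ⟨m, rfl⟩ : ∃ m, n = m + 1 := ⟨n - 1, (Nat.succ_pred_eq_of_ne_zero hn0).symm⟩
  have hm : Subgroup.lowerCentralSeries (⊤ : Subgroup G) m ≠ ⊥ := Nat.find_min hex (hn ▸ Nat.lt_succ_self m)
  have hm0 : m ≠ 0 := by
    intro h0
    subst h0
    exact habelian hbot
  obtain ⟨k, rfl⟩ : ∃ k, m = k + 1 := ⟨m - 1, (Nat.succ_pred_eq_of_ne_zero hm0).symm⟩
  -- find a nontrivial single commutator in L(k+1) = ⁅L(k), ⊤⁆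
  have hne : ¬ ∀ g ∈ Subgroup.lowerCentralSeries (⊤ : Subgroup G) k, ∀ f : G, ⁅g, f⁆ ∈ (⊥ : Subgroup G) := by
    intro hall
    apply hm
    show ⁅Subgroup.lowerCentralSeries (⊤ : Subgroup G) k, ⊤⁆ = ⊥
    rw [← le_bot_iff]
    exact Subgroup.commutator_le.mpr fun g hg f _ => hall g hg f
  push_neg at hne
  obtain ⟨g, hg, f, hgf⟩ := hne
  rw [Subgroup.mem_bot] at hgf
  -- h := ⁅g, f⁆ lies in L(k+1), which is central since L(k+2) = ⊥
  have hmemh : ⁅g, f⁆ ∈ Subgroup.lowerCentralSeries (⊤ : Subgroup G) (k + 1) := by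
    show ⁅g, f⁆ ∈ ⁅Subgroup.lowerCentralSeries (⊤ : Subgroup G) k, ⊤⁆
    exact Subgroup.commutator_mem_commutator hg (Subgroup.mem_top f)
  have hcentral : ∀ x : G, Commute ⁅g, f⁆ x := by
    intro x
    rw [← commutatorElement_eq_one_iff_commute, ← Subgroup.mem_bot, ← hbot]
    show ⁅⁅g, f⁆, x⁆ ∈ ⁅Subgroup.lowerCentralSeries (⊤ : Subgroup G) (k + 1), ⊤⁆
    exact Subgroup.commutator_mem_commutator hmemh (Subgroup.mem_top x)
  exact ⟨g, f, ⁅g, f⁆, hgf, rfl, (hcentral g).symm, (hcentral f).symm⟩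
end

section
/- A group acting freely on the real line by orientation-preserving homeomorphisms admits a left-invariant linear order; in particular, any group acting freely (every nontrivial element acts without fixed points) by orientation-preserving homeomorphisms of ℝ is torsion-free. -/
/-- A group acting freely on `ℝ` by orientation-preserving homeomorphisms
(equivalently, order-isomorphisms of `ℝ`) admits a left-invariant linear order;
in particular it is torsion-free. -/
theorem stmt_1 (G : Type*) [Group G] (φ : G →* (ℝ ≃o ℝ))
    (hfree : ∀ g : G, g ≠ 1 → ∀ x : ℝ, φ g x ≠ x) :
    (∃ r : G → G → Prop, IsStrictTotalOrder G r ∧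
      ∀ a b c : G, r b c → r (a * b) (a * c)) ∧
    (∀ g : G, g ≠ 1 → ¬ IsOfFinOrder g) := by
  set r : G → G → Prop := fun a b => φ a 0 < φ b 0 with hr
  have happ : ∀ a b : G, ∀ x : ℝ, φ (a * b) x = φ a (φ b x) := by
    intro a b x; rw [map_mul]; rfl
  -- injectivity of g ↦ φ g 0
  have hinj : ∀ a b : G, φ a 0 = φ b 0 → a = b := by
    intro a b h
    by_contra hne
    have h1 : b⁻¹ * a ≠ 1 := by
      simp only [ne_eq, inv_mul_eq_one]; exact fun e => hne e.symm
    have := hfree _ h1 0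
    apply this
    rw [happ, h, ← happ, inv_mul_cancel, map_one]
    rfl
  have hinv : ∀ a b c : G, r b c → r (a * b) (a * c) := by
    intro a b c h
    simp only [hr, happ]
    exact (φ a).strictMono h
  have hsto : IsStrictTotalOrder G r := by
    refine { trichotomous := ?_, irrefl := ?_, trans := ?_ }
    · intro a b
      rcases lt_trichotomy (φ a 0) (φ b 0) with h | h | h
      · exact fun h1 _ => absurd h h1
      · exact fun _ _ => hinj a b h
      · exact fun _ h2 => absurd h h2
    · intro a; simp [hr]
    · intro a b c hab hbc; exact lt_trans hab hbc
  refine ⟨⟨r, hsto, hinv⟩, ?_⟩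
  intro g hg hfin
  obtain ⟨n, hn, hpow⟩ := isOfFinOrder_iff_pow_eq_one.mp hfin
  have key : ∀ (h : G), r 1 h → ∀ m : ℕ, 1 ≤ m → r 1 (h ^ m) := by
    intro h h1 m hm
    induction m with
    | zero => omega
    | succ k ih =>
      rcases Nat.eq_or_lt_of_le hm with h' | h'
      · rw [← h', pow_one]; exact h1
      · have hk := ih (by omega)
        have := hinv h 1 (h ^ k) hk
        rw [mul_one, ← pow_succ'] at this
        exact hsto.trans _ _ _ h1 this
  rcases (lt_trichotomy (φ 1 0) (φ g 0)).imp_right (Or.imp_left (hinj 1 g)) with h1 | h1 | h1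
  · have := key g h1 n hn
    rw [hpow] at this
    exact hsto.irrefl _ this
  · exact hg h1.symm
  · have h1' : r 1 g⁻¹ := by
      have := hinv g⁻¹ g 1 h1
      rwa [inv_mul_cancel, mul_one] at this
    have := key g⁻¹ h1' n hn
    rw [inv_pow, hpow, inv_one] at this
    exact hsto.irrefl _ this
end

section
/- Every two-dimensional ideal of the Lie algebra u(4,ℝ) of strictly upper triangular real 4×4 matrices is of the form span(E₁₄, aE₁₃ + bE₂₄) for some real numbers a, b not both zero, where Eᵢⱼ are the elementary matrices. -/
open Matrix

attribute [local instance 100] LieRing.ofAssociativeRing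

/-- The Lie algebra `u(n,ℝ)` of strictly upper triangular real `n × n` matrices,
as a Lie subalgebra of the matrix algebra. -/
def u (n : ℕ) : LieSubalgebra ℝ (Matrix (Fin n) (Fin n) ℝ) where
  carrier := {A | ∀ i j : Fin n, ¬ i < j → A i j = 0}
  add_mem' := by
    intro A B hA hB i j hij
    simp [hA i j hij, hB i j hij]
  zero_mem' := by intro i j hij; simp
  smul_mem' := by
    intro c A hA i j hij
    simp [hA i j hij]
  lie_mem' := by
    intro A B hA hB i j hij
    have key : ∀ C D : Matrix (Fin n) (Fin n) ℝ,
        (∀ i j : Fin n, ¬ i < j → C i j = 0) → (∀ i j : Fin n, ¬ i < j → D i j = 0) →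
        (C * D) i j = 0 := by
      intro C D hC hD
      rw [Matrix.mul_apply]
      apply Finset.sum_eq_zero
      intro k _
      by_cases hik : i < k
      · rw [hD k j fun h' => hij (hik.trans h'), mul_zero]
      · rw [hC i k hik, zero_mul]
    rw [Ring.lie_def, Matrix.sub_apply, key A B hA hB, key B A hB hA, sub_zero]

/-- `E i j`, the elementary matrix with a `1` in position `(i,j)`, as an element
of `u(4,ℝ)` (for `i < j`). -/
def E (i j : Fin 4) (hij : i < j) : u 4 :=
  ⟨Matrix.single i j (1 : ℝ), by
    intro k l hkl
    rw [Matrix.single]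
    simp only [Matrix.of_apply]
    rw [if_neg]
    rintro ⟨rfl, rfl⟩
    exact hkl hij⟩


section Aux

local notation "e01" => E 0 1 (by decide)
local notation "e02" => E 0 2 (by decide)
local notation "e03" => E 0 3 (by decide)
local notation "e12" => E 1 2 (by decide)
local notation "e13" => E 1 3 (by decide)
local notation "e23" => E 2 3 (by decide)

lemma Eval (i j : Fin 4) (hij : i < j) (k l : Fin 4) :
    (E i j hij).1 k l = if i = k ∧ j = l then 1 else 0 := rfl

lemma zero_entries (x : u 4) : x.1 0 0 = 0 ∧ x.1 1 0 = 0 ∧ x.1 1 1 = 0 ∧ x.1 2 0 = 0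
    ∧ x.1 2 1 = 0 ∧ x.1 2 2 = 0 ∧ x.1 3 0 = 0 ∧ x.1 3 1 = 0 ∧ x.1 3 2 = 0 ∧ x.1 3 3 = 0 := by
  have h := x.2
  exact ⟨h 0 0 (by decide), h 1 0 (by decide), h 1 1 (by decide), h 2 0 (by decide),
    h 2 1 (by decide), h 2 2 (by decide), h 3 0 (by decide), h 3 1 (by decide),
    h 3 2 (by decide), h 3 3 (by decide)⟩

lemma coe_comb (α β : ℝ) (y z : u 4) (i j : Fin 4) :
    ((α • y + β • z : u 4) : Matrix (Fin 4) (Fin 4) ℝ) i j = α * y.1 i j + β * z.1 i j := rfl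

lemma coe_comb_sub (α β : ℝ) (y z : u 4) (i j : Fin 4) :
    ((α • y - β • z : u 4) : Matrix (Fin 4) (Fin 4) ℝ) i j = α * y.1 i j - β * z.1 i j := rfl

lemma coe_comb_neg (α β : ℝ) (y z : u 4) (i j : Fin 4) :
    ((-(α • y + β • z) : u 4) : Matrix (Fin 4) (Fin 4) ℝ) i j = -(α * y.1 i j + β * z.1 i j) := rfl

lemma bra01 (x : u 4) : ⁅(e01 : u 4), x⁆ = x.1 1 2 • e02 + x.1 1 3 • e03 := by
  obtain ⟨h0,h1,h2,h3,h4,h5,h6,h7,h8,h9⟩ := zero_entries x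
  apply Subtype.ext
  have hr : ((x.1 1 2 • e02 + x.1 1 3 • e03 : u 4) : Matrix (Fin 4) (Fin 4) ℝ)
      = x.1 1 2 • ((e02 : u 4) : Matrix (Fin 4) (Fin 4) ℝ)
        + x.1 1 3 • ((e03 : u 4) : Matrix (Fin 4) (Fin 4) ℝ) := rfl
  rw [hr]
  show ⁅(Matrix.single 0 1 (1:ℝ)), x.1⁆ = _
  ext i j
  fin_cases i <;> fin_cases j <;>
    simp [Ring.lie_def, Matrix.mul_apply, Fin.sum_univ_four, Matrix.single, E,
      h0,h1,h2,h3,h4,h5,h6,h7,h8,h9]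

lemma bra12 (x : u 4) : ⁅(e12 : u 4), x⁆ = x.1 2 3 • e13 - x.1 0 1 • e02 := by
  obtain ⟨h0,h1,h2,h3,h4,h5,h6,h7,h8,h9⟩ := zero_entries x
  apply Subtype.ext
  have hr : ((x.1 2 3 • e13 - x.1 0 1 • e02 : u 4) : Matrix (Fin 4) (Fin 4) ℝ)
      = x.1 2 3 • ((e13 : u 4) : Matrix (Fin 4) (Fin 4) ℝ)
        - x.1 0 1 • ((e02 : u 4) : Matrix (Fin 4) (Fin 4) ℝ) := rfl
  rw [hr]
  show ⁅(Matrix.single 1 2 (1:ℝ)), x.1⁆ = _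
  ext i j
  fin_cases i <;> fin_cases j <;>
    simp [Ring.lie_def, Matrix.mul_apply, Fin.sum_univ_four, Matrix.single, E,
      h0,h1,h2,h3,h4,h5,h6,h7,h8,h9]

lemma bra23 (x : u 4) : ⁅(e23 : u 4), x⁆ = -(x.1 0 2 • e03 + x.1 1 2 • e13) := by
  obtain ⟨h0,h1,h2,h3,h4,h5,h6,h7,h8,h9⟩ := zero_entries x
  apply Subtype.ext
  have hr : ((-(x.1 0 2 • e03 + x.1 1 2 • e13) : u 4) : Matrix (Fin 4) (Fin 4) ℝ)
      = -(x.1 0 2 • ((e03 : u 4) : Matrix (Fin 4) (Fin 4) ℝ)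
        + x.1 1 2 • ((e13 : u 4) : Matrix (Fin 4) (Fin 4) ℝ)) := rfl
  rw [hr]
  show ⁅(Matrix.single 2 3 (1:ℝ)), x.1⁆ = _
  ext i j
  fin_cases i <;> fin_cases j <;>
    simp [Ring.lie_def, Matrix.mul_apply, Fin.sum_univ_four, Matrix.single, E,
      h0,h1,h2,h3,h4,h5,h6,h7,h8,h9]

lemma bra02 (x : u 4) : ⁅(e02 : u 4), x⁆ = x.1 2 3 • e03 := by
  obtain ⟨h0,h1,h2,h3,h4,h5,h6,h7,h8,h9⟩ := zero_entries x
  apply Subtype.ext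
  have hr : ((x.1 2 3 • e03 : u 4) : Matrix (Fin 4) (Fin 4) ℝ)
      = x.1 2 3 • ((e03 : u 4) : Matrix (Fin 4) (Fin 4) ℝ) := rfl
  rw [hr]
  show ⁅(Matrix.single 0 2 (1:ℝ)), x.1⁆ = _
  ext i j
  fin_cases i <;> fin_cases j <;>
    simp [Ring.lie_def, Matrix.mul_apply, Fin.sum_univ_four, Matrix.single, E,
      h0,h1,h2,h3,h4,h5,h6,h7,h8,h9]

lemma bra13 (x : u 4) : ⁅(e13 : u 4), x⁆ = -(x.1 0 1 • e03) := by
  obtain ⟨h0,h1,h2,h3,h4,h5,h6,h7,h8,h9⟩ := zero_entries x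
  apply Subtype.ext
  have hr : ((-(x.1 0 1 • e03) : u 4) : Matrix (Fin 4) (Fin 4) ℝ)
      = -(x.1 0 1 • ((e03 : u 4) : Matrix (Fin 4) (Fin 4) ℝ)) := rfl
  rw [hr]
  show ⁅(Matrix.single 1 3 (1:ℝ)), x.1⁆ = _
  ext i j
  fin_cases i <;> fin_cases j <;>
    simp [Ring.lie_def, Matrix.mul_apply, Fin.sum_univ_four, Matrix.single, E,
      h0,h1,h2,h3,h4,h5,h6,h7,h8,h9]

lemma repr4 (x : u 4) : x = x.1 0 1 • e01 + x.1 0 2 • e02 + x.1 0 3 • e03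
    + x.1 1 2 • e12 + x.1 1 3 • e13 + x.1 2 3 • e23 := by
  obtain ⟨h0,h1,h2,h3,h4,h5,h6,h7,h8,h9⟩ := zero_entries x
  apply Subtype.ext
  have hr : ((x.1 0 1 • e01 + x.1 0 2 • e02 + x.1 0 3 • e03
      + x.1 1 2 • e12 + x.1 1 3 • e13 + x.1 2 3 • e23 : u 4) : Matrix (Fin 4) (Fin 4) ℝ)
      = x.1 0 1 • ((e01 : u 4) : Matrix (Fin 4) (Fin 4) ℝ)
      + x.1 0 2 • ((e02 : u 4) : Matrix (Fin 4) (Fin 4) ℝ)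
      + x.1 0 3 • ((e03 : u 4) : Matrix (Fin 4) (Fin 4) ℝ)
      + x.1 1 2 • ((e12 : u 4) : Matrix (Fin 4) (Fin 4) ℝ)
      + x.1 1 3 • ((e13 : u 4) : Matrix (Fin 4) (Fin 4) ℝ)
      + x.1 2 3 • ((e23 : u 4) : Matrix (Fin 4) (Fin 4) ℝ) := rfl
  rw [hr]
  ext i j
  fin_cases i <;> fin_cases j <;>
    simp [Matrix.single, E, h0,h1,h2,h3,h4,h5,h6,h7,h8,h9]

end Aux

section Main

local notation "e01" => E 0 1 (by decide)
local notation "e02" => E 0 2 (by decide)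
local notation "e03" => E 0 3 (by decide)
local notation "e12" => E 1 2 (by decide)
local notation "e13" => E 1 3 (by decide)
local notation "e23" => E 2 3 (by decide)

/-- Every two-dimensional ideal of `u(4,ℝ)` is of the form
`span(E₁₄, a·E₁₃ + b·E₂₄)` with `(a,b) ≠ (0,0)`. -/
theorem stmt_7 (I : LieIdeal ℝ (u 4)) (hI : Module.finrank ℝ I = 2) :
    ∃ a b : ℝ, ¬ (a = 0 ∧ b = 0) ∧
      (I : Submodule ℝ (u 4)) =
        Submodule.span ℝ {E 0 3 (by decide), a • E 0 2 (by decide) + b • E 1 3 (by decide)} := by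
  classical
  haveI : FiniteDimensional ℝ (u 4) :=
    FiniteDimensional.of_injective ((u 4).toSubmodule).subtype Subtype.val_injective
  set S : Submodule ℝ (u 4) := (I : Submodule ℝ (u 4)) with hS
  have hIfin : Module.finrank ℝ S = 2 := hI
  have he03 : (e03 : u 4) ≠ 0 := by
    intro h
    have h2 := congrArg (fun z : u 4 => z.1 0 3) h
    simp [Eval] at h2
  have hsmul : ∀ c : ℝ, c ≠ 0 → c • (e03 : u 4) ∈ S → (e03 : u 4) ∈ S := by
    intro c hc h
    have h2 := S.smul_mem c⁻¹ h
    rwa [smul_smul, inv_mul_cancel₀ hc, one_smul] at h2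
  have hlie : ∀ (x y : u 4), y ∈ S → ⁅x, y⁆ ∈ S := fun x y hy => I.lie_mem hy
  -- a nonzero element of S
  have hbot : ∃ v, v ∈ S ∧ v ≠ 0 := by
    by_contra h
    push_neg at h
    have hb : S = ⊥ := (Submodule.eq_bot_iff S).2 h
    rw [hb, finrank_bot] at hIfin
    norm_num at hIfin
  obtain ⟨v, hvS, hv0⟩ := hbot
  -- e03 is in S
  have he03S : (e03 : u 4) ∈ S := by
    by_cases h01 : v.1 0 1 = 0
    · by_cases h12 : v.1 1 2 = 0
      · by_cases h23 : v.1 2 3 = 0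
        · by_cases h02 : v.1 0 2 = 0
          · by_cases h13 : v.1 1 3 = 0
            · -- v = v03 • e03
              have hv := repr4 v
              rw [h01, h12, h23, h02, h13] at hv
              simp only [zero_smul, zero_add, add_zero] at hv
              have h03 : v.1 0 3 ≠ 0 := by
                intro h03
                rw [h03, zero_smul] at hv
                exact hv0 hv
              exact hsmul _ h03 (by rw [← hv]; exact hvS)
            · have h := hlie e01 v hvS
              rw [bra01, h12, zero_smul, zero_add] at h
              exact hsmul _ h13 h
          · have h := hlie e23 v hvS
            rw [bra23, h12, zero_smul, add_zero, ← neg_smul] at h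
            exact hsmul _ (neg_ne_zero.2 h02) h
        · have h := hlie e02 v hvS
          rw [bra02] at h
          exact hsmul _ h23 h
      · have h := hlie e23 v hvS
        rw [bra23] at h
        have h2 := hlie e01 _ h
        rw [bra01] at h2
        simp (config := { decide := true }) only [coe_comb_neg, Eval] at h2
        norm_num at h2
        exact hsmul _ h12 h2
    · have h := hlie e13 v hvS
      rw [bra13, ← neg_smul] at h
      exact hsmul _ (neg_ne_zero.2 h01) h
  -- an element of S outside span {e03}
  have hnotle : ¬ S ≤ Submodule.span ℝ {(e03 : u 4)} := by
    intro hle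
    have h1 : Module.finrank ℝ (Submodule.span ℝ {(e03 : u 4)}) = 1 :=
      finrank_span_singleton he03
    have h2 := Submodule.finrank_mono hle
    rw [hIfin, h1] at h2
    norm_num at h2
  obtain ⟨w, hwS, hw⟩ := SetLike.not_le_iff_exists.1 hnotle
  -- S = span {e03, w}
  have hspan_le : Submodule.span ℝ {(e03 : u 4), w} ≤ S := by
    rw [Submodule.span_le]
    rintro x hx
    rcases Set.mem_insert_iff.1 hx with h | h
    · rw [h]; exact he03S
    · rw [Set.mem_singleton_iff.1 h]; exact hwS
  have hlt : Submodule.span ℝ {(e03 : u 4)} < Submodule.span ℝ {(e03 : u 4), w} := by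
    apply lt_of_le_of_ne (Submodule.span_mono (Set.singleton_subset_iff.2 (Set.mem_insert _ _)))
    intro heq
    apply hw
    rw [heq]
    exact Submodule.subset_span (Set.mem_insert_iff.2 (Or.inr rfl))
  have h2le : 2 ≤ Module.finrank ℝ (Submodule.span ℝ {(e03 : u 4), w}) := by
    have := Submodule.finrank_lt_finrank_of_lt hlt
    rw [finrank_span_singleton he03] at this
    omega
  have hSeq : Submodule.span ℝ {(e03 : u 4), w} = S :=
    Submodule.eq_of_le_of_finrank_le hspan_le (by rw [hIfin]; exact h2le)
  -- coefficient constraints on w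
  have hbr1 := hlie e01 w hwS
  rw [bra01, ← hSeq] at hbr1
  obtain ⟨α, β, hαβ⟩ := Submodule.mem_span_pair.1 hbr1
  have t02 := congrArg (fun z : u 4 => z.1 0 2) hαβ
  have t12 := congrArg (fun z : u 4 => z.1 1 2) hαβ
  simp (config := { decide := true }) only [coe_comb, Eval] at t02 t12
  norm_num at t02 t12
  have hw12 : w.1 1 2 = 0 := by
    rcases t12 with hβ | h
    · rw [hβ, zero_mul] at t02; exact t02.symm
    · exact h
  have hbr2 := hlie e12 w hwS
  rw [bra12, ← hSeq] at hbr2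
  obtain ⟨γ, δ, hγδ⟩ := Submodule.mem_span_pair.1 hbr2
  have s01 := congrArg (fun z : u 4 => z.1 0 1) hγδ
  have s23 := congrArg (fun z : u 4 => z.1 2 3) hγδ
  have s02 := congrArg (fun z : u 4 => z.1 0 2) hγδ
  have s13 := congrArg (fun z : u 4 => z.1 1 3) hγδ
  simp (config := { decide := true }) only [coe_comb, coe_comb_sub, Eval] at s01 s23 s02 s13
  norm_num at s01 s23 s02 s13
  have hw01 : w.1 0 1 = 0 := by
    rcases s01 with hδ | h
    · rw [hδ, zero_mul] at s02; exact neg_eq_zero.1 s02.symm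
    · exact h
  have hw23 : w.1 2 3 = 0 := by
    rcases s23 with hδ | h
    · rw [hδ, zero_mul] at s13; exact s13.symm
    · exact h
  obtain ⟨a, b, c, hv⟩ : ∃ a b c : ℝ, w = a • e02 + c • e03 + b • e13 := by
    refine ⟨w.1 0 2, w.1 1 3, w.1 0 3, ?_⟩
    have hr := repr4 w
    rw [hw01, hw12, hw23] at hr
    simpa only [zero_smul, zero_add, add_zero] using hr
  refine ⟨a, b, ?_, ?_⟩
  · rintro ⟨ha, hb⟩
    apply hw
    rw [hv, ha, hb]
    simp only [zero_smul, zero_add, add_zero]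
    exact Submodule.smul_mem _ _ (Submodule.mem_span_singleton_self _)
  · rw [← hSeq]
    apply le_antisymm
    · rw [Submodule.span_le]
      rintro x hx
      rcases Set.mem_insert_iff.1 hx with h | h
      · rw [h]; exact Submodule.subset_span (Set.mem_insert _ _)
      · rw [Set.mem_singleton_iff.1 h]
        exact Submodule.mem_span_pair.2 ⟨c, 1, by rw [one_smul, hv]; abel⟩
    · rw [Submodule.span_le]
      rintro x hx
      rcases Set.mem_insert_iff.1 hx with h | h
      · rw [h]; exact Submodule.subset_span (Set.mem_insert _ _)
      · rw [Set.mem_singleton_iff.1 h]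
        exact Submodule.mem_span_pair.2 ⟨-c, 1, by rw [one_smul, hv, neg_smul]; abel⟩

end Main
end

section
/- Let G be a finitely generated torsion-free nilpotent group such that some finite-index subgroup Γ ≤ G is metabelian. Then G itself is metabelian. -/
open Subgroup (center)
open scoped commutatorElement
open scoped IsMulCommutative

section Lemmas

variable {G : Type*} [Group G]

lemma myComm_mul_right (x a b : G) : ⁅x, a * b⁆ = ⁅x, a⁆ * (a * ⁅x, b⁆ * a⁻¹) := by group

lemma myConj_center {c : G} (hc : c ∈ center G) (g : G) : g * c * g⁻¹ = c := by
  rw [Subgroup.mem_center_iff.mp hc g]; group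

lemma myComm_pow_right (x g : G) (h : ⁅x, g⁆ ∈ center G) (n : ℕ) :
    ⁅x, g ^ n⁆ = ⁅x, g⁆ ^ n := by
  induction n with
  | zero => simp
  | succ n ih =>
    rw [pow_succ', myComm_mul_right, ih, myConj_center (pow_mem h n) g]
    exact (pow_succ' _ _).symm

lemma myComm_mul_left (a b x : G) : ⁅a * b, x⁆ = (a * ⁅b, x⁆ * a⁻¹) * ⁅a, x⁆ := by group

lemma myComm_pow_left (g x : G) (h : ⁅g, x⁆ ∈ center G) (n : ℕ) :
    ⁅g ^ n, x⁆ = ⁅g, x⁆ ^ n := by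
  induction n with
  | zero => simp
  | succ n ih =>
    rw [pow_succ', myComm_mul_left, ih, myConj_center (pow_mem h n) g]
    exact (pow_succ _ _).symm

/-- image of an element of `Z_{j+1}` is central in `G ⧸ Z_j`. -/
lemma myMem_center_quot (j : ℕ) {g : G} (hg : g ∈ Subgroup.upperCentralSeries G (j + 1)) :
    ((g : G ⧸ Subgroup.upperCentralSeries G j)) ∈ center (G ⧸ Subgroup.upperCentralSeries G j) := by
  rw [Subgroup.mem_center_iff]
  intro q
  induction q using QuotientGroup.induction_on with
  | H x =>
    show ((x * g : G) : G ⧸ Subgroup.upperCentralSeries G j) = ((g * x : G) : _)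
    rw [QuotientGroup.eq]
    have := Subgroup.mem_upperCentralSeries_succ_iff.mp ((Subgroup.upperCentralSeries G (j+1)).inv_mem hg) x⁻¹
    convert this using 1
    group

end Lemmas

section Iso

variable {G : Type*} [Group G]

/-- Single-step isolation of upper central series terms. -/
lemma myISO (htf : ∀ (g : G) (n : ℕ), 0 < n → g ^ n = 1 → g = 1) :
    ∀ (j : ℕ) (g : G) (n : ℕ), 0 < n → g ∈ Subgroup.upperCentralSeries G (j + 1) →
      g ^ n ∈ Subgroup.upperCentralSeries G j → g ∈ Subgroup.upperCentralSeries G j := by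
  intro j
  induction j with
  | zero =>
    intro g n hn _ hgn
    rw [Subgroup.upperCentralSeries_zero, Subgroup.mem_bot] at *
    exact htf g n hn hgn
  | succ j ih =>
    intro g n hn hg1 hgn
    rw [Subgroup.mem_upperCentralSeries_succ_iff]
    intro x
    have hs1 : ⁅g, x⁆ ∈ Subgroup.upperCentralSeries G (j + 1) := by
      have := Subgroup.mem_upperCentralSeries_succ_iff.mp hg1 x
      simpa [commutatorElement_def] using this
    refine ?_
    have hsn : ⁅g, x⁆ ^ n ∈ Subgroup.upperCentralSeries G j := by
      rw [← QuotientGroup.eq_one_iff (N := Subgroup.upperCentralSeries G j)]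
      have hcent : (⁅(g : G ⧸ Subgroup.upperCentralSeries G j), (x : G ⧸ Subgroup.upperCentralSeries G j)⁆)
          ∈ center (G ⧸ Subgroup.upperCentralSeries G j) := by
        have : ((⁅g, x⁆ : G) : G ⧸ Subgroup.upperCentralSeries G j) ∈ center _ := myMem_center_quot j hs1
        simpa [commutatorElement_def] using this
      have h1 : ⁅((g : G ⧸ Subgroup.upperCentralSeries G j)) ^ n, (x : G ⧸ Subgroup.upperCentralSeries G j)⁆
          = ⁅(g : G ⧸ Subgroup.upperCentralSeries G j), (x : G ⧸ Subgroup.upperCentralSeries G j)⁆ ^ n :=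
        myComm_pow_left _ _ hcent n
      have h2 : ((g ^ n : G) : G ⧸ Subgroup.upperCentralSeries G j) ∈ center _ :=
        myMem_center_quot j hgn
      have h3 : ⁅((g : G ⧸ Subgroup.upperCentralSeries G j)) ^ n, (x : G ⧸ Subgroup.upperCentralSeries G j)⁆ = 1 := by
        rw [commutatorElement_eq_one_iff_mul_comm]
        push_cast at h2
        exact (Subgroup.mem_center_iff.mp h2 _).symm
      calc (⁅(g : G ⧸ Subgroup.upperCentralSeries G j), (x : G ⧸ Subgroup.upperCentralSeries G j)⁆) ^ n
          = ⁅((g : G ⧸ Subgroup.upperCentralSeries G j)) ^ n, (x : G ⧸ Subgroup.upperCentralSeries G j)⁆ := h1.symm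
        _ = 1 := h3
    have := ih ⁅g, x⁆ n hn hs1 hsn
    simpa [commutatorElement_def] using this

lemma myISO' (htf : ∀ (g : G) (n : ℕ), 0 < n → g ^ n = 1 → g = 1)
    (hnil : Group.IsNilpotent G) (j : ℕ) (g : G) (n : ℕ) (hn : 0 < n)
    (h : g ^ n ∈ Subgroup.upperCentralSeries G j) : g ∈ Subgroup.upperCentralSeries G j := by
  have key : ∀ d : ℕ, ∀ g : G, g ^ n ∈ Subgroup.upperCentralSeries G j →
      g ∈ Subgroup.upperCentralSeries G (j + d) → g ∈ Subgroup.upperCentralSeries G j := by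
    intro d
    induction d with
    | zero => intro g _ hg; simpa using hg
    | succ d ih =>
      intro g hgn hg
      exact ih g hgn (myISO htf (j + d) g n hn hg
        (Subgroup.upperCentralSeries_mono G (Nat.le_add_right j d) hgn))
  refine key (Group.nilpotencyClass G) g h ?_
  have : Subgroup.upperCentralSeries G (Group.nilpotencyClass G) = ⊤ := Subgroup.upperCentralSeries_nilpotencyClass
  exact Subgroup.upperCentralSeries_mono G (Nat.le_add_left _ j) (by rw [this]; trivial)

/-- Isolation of centralizers: in a torsion-free nilpotent group,
if `x` commutes with `g ^ n`, `n > 0`, then `x` commutes with `g`. -/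
lemma myLemA (htf : ∀ (g : G) (n : ℕ), 0 < n → g ^ n = 1 → g = 1)
    (hnil : Group.IsNilpotent G) (x g : G) (n : ℕ) (hn : 0 < n)
    (h : ⁅x, g ^ n⁆ = 1) : ⁅x, g⁆ = 1 := by
  have key : ∀ d : ℕ, ⁅x, g⁆ ∈ Subgroup.upperCentralSeries G d → ⁅x, g⁆ = 1 := by
    intro d
    induction d with
    | zero => intro ht; rw [Subgroup.upperCentralSeries_zero, Subgroup.mem_bot] at ht; exact ht
    | succ d ih =>
      intro ht
      refine ih ?_
      refine myISO' htf hnil d ⁅x, g⁆ n hn ?_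
      rw [← QuotientGroup.eq_one_iff (N := Subgroup.upperCentralSeries G d)]
      have hcent : (⁅(x : G ⧸ Subgroup.upperCentralSeries G d), (g : G ⧸ Subgroup.upperCentralSeries G d)⁆)
          ∈ center (G ⧸ Subgroup.upperCentralSeries G d) := by
        have := myMem_center_quot d ht
        simpa [commutatorElement_def] using this
      have h1 := myComm_pow_right (x : G ⧸ Subgroup.upperCentralSeries G d)
        (g : G ⧸ Subgroup.upperCentralSeries G d) hcent n
      have h2 : ⁅(x : G ⧸ Subgroup.upperCentralSeries G d), ((g : G ⧸ Subgroup.upperCentralSeries G d)) ^ n⁆ = 1 := by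
        have : ((⁅x, g ^ n⁆ : G) : G ⧸ Subgroup.upperCentralSeries G d) = 1 := by rw [h]; rfl
        simpa [commutatorElement_def] using this
      have h3 : ((⁅x, g⁆ ^ n : G) : G ⧸ Subgroup.upperCentralSeries G d)
          = ⁅(x : G ⧸ Subgroup.upperCentralSeries G d), (g : G ⧸ Subgroup.upperCentralSeries G d)⁆ ^ n := by
        simp [commutatorElement_def]
      rw [h3, ← h1, h2]
  refine key (Group.nilpotencyClass G) ?_
  have : Subgroup.upperCentralSeries G (Group.nilpotencyClass G) = ⊤ := Subgroup.upperCentralSeries_nilpotencyClass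
  rw [this]; trivial

end Iso

section Transfer

variable {G : Type*} [Group G]

/-- image of central element is central in a quotient. -/
lemma myCenter_quot (N : Subgroup G) [N.Normal] {z : G} (hz : z ∈ center G) :
    ((z : G ⧸ N)) ∈ center (G ⧸ N) := by
  rw [Subgroup.mem_center_iff]
  intro q
  induction q using QuotientGroup.induction_on with
  | H x =>
    show ((x * z : G) : G ⧸ N) = ((z * x : G) : _)
    rw [Subgroup.mem_center_iff.mp hz x]

/-- image of a commutator-subgroup element lies in the commutator subgroup of a quotient. -/
lemma myCommutator_quot (N : Subgroup G) [N.Normal] {z : G} (hz : z ∈ commutator G) :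
    ((z : G ⧸ N)) ∈ commutator (G ⧸ N) := by
  have : ((z : G ⧸ N)) ∈ (commutator G).map (QuotientGroup.mk' N) :=
    Subgroup.mem_map_of_mem _ hz
  rw [commutator_def, Subgroup.map_commutator] at this
  exact (Subgroup.commutator_mono le_top le_top) this

/-- Transfer argument: a central element of the commutator subgroup has a positive
power lying in `⁅Γc, Γc⁆`, where `Γc` is any normal subgroup of finite index. -/
lemma myLemZ (Γc : Subgroup G) [Γc.Normal] (hfi : Γc.FiniteIndex)
    {z : G} (hz : z ∈ center G) (hz' : z ∈ commutator G) :
    ∃ m : ℕ, 0 < m ∧ z ^ m ∈ (⁅Γc, Γc⁆ : Subgroup G) := by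
  set Δ : Subgroup G := ⁅Γc, Γc⁆ with hΔ
  haveI : Δ.Normal := Subgroup.commutator_normal Γc Γc
  set A : Subgroup (G ⧸ Δ) := Γc.map (QuotientGroup.mk' Δ) with hA
  have hAcomm : IsMulCommutative A := by
    constructor; constructor
    rintro ⟨a, ha⟩ ⟨b, hb⟩
    obtain ⟨a₀, ha₀, rfl⟩ := Subgroup.mem_map.mp ha
    obtain ⟨b₀, hb₀, rfl⟩ := Subgroup.mem_map.mp hb
    have key : ((a₀ * b₀ : G) : G ⧸ Δ) = ((b₀ * a₀ : G) : G ⧸ Δ) := by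
      rw [QuotientGroup.eq]
      have hc : ⁅b₀⁻¹, a₀⁻¹⁆ ∈ Δ :=
        Subgroup.commutator_mem_commutator (Γc.inv_mem hb₀) (Γc.inv_mem ha₀)
      convert hc using 1
      group
    exact Subtype.ext key
  haveI := hAcomm
  have hAfi : A.FiniteIndex := by
    constructor
    intro h0
    exact hfi.index_ne_zero (Nat.eq_zero_of_zero_dvd (h0 ▸ Subgroup.index_map_dvd
      (QuotientGroup.mk'_surjective Δ) (H := Γc)))
  haveI := hAfi
  have hzc : ((z : G ⧸ Δ)) ∈ center (G ⧸ Δ) := myCenter_quot Δ hz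
  have hzk : ((z : G ⧸ Δ)) ∈ commutator (G ⧸ Δ) := myCommutator_quot Δ hz'
  have key : ∀ (k : ℕ) (g₀ : G ⧸ Δ), g₀⁻¹ * (z : G ⧸ Δ) ^ k * g₀ ∈ A →
      g₀⁻¹ * (z : G ⧸ Δ) ^ k * g₀ = (z : G ⧸ Δ) ^ k := by
    intro k g₀ _
    have : (z : G ⧸ Δ) ^ k ∈ center (G ⧸ Δ) := pow_mem hzc k
    rw [mul_assoc, ← Subgroup.mem_center_iff.mp this g₀]
    group
  have h1 := MonoidHom.transfer_eq_pow (MonoidHom.id A) ((z : G ⧸ Δ)) key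
  have h2 : MonoidHom.transfer (MonoidHom.id A) ((z : G ⧸ Δ)) = 1 :=
    Abelianization.commutator_subset_ker _ hzk
  rw [h2] at h1
  have h3 : (z : G ⧸ Δ) ^ A.index = 1 := by
    have := congrArg Subtype.val h1
    exact this.symm
  refine ⟨A.index, Nat.pos_of_ne_zero hAfi.index_ne_zero, ?_⟩
  rw [← QuotientGroup.eq_one_iff (N := Δ)]
  rw [show ((z ^ A.index : G) : G ⧸ Δ) = (z : G ⧸ Δ) ^ A.index from rfl]
  exact h3

end Transfer

section Key

universe u

/-- Key induction: in a torsion-free nilpotent group (class ≤ c), every element of the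
commutator subgroup has a positive power in `⁅Γc, Γc⁆` for any normal finite-index `Γc`. -/
lemma myKeyT : ∀ (c : ℕ) (G : Type u) (instG : Group G),
    (∀ (g : G) (n : ℕ), 0 < n → g ^ n = 1 → g = 1) →
    Subgroup.upperCentralSeries G c = ⊤ →
    ∀ (Γc : Subgroup G), Γc.Normal → Γc.FiniteIndex →
    ∀ u ∈ commutator G, ∃ m : ℕ, 0 < m ∧ u ^ m ∈ (⁅Γc, Γc⁆ : Subgroup G) := by
  intro c
  induction c with
  | zero =>
    intro G instG htf hc Γc _ _ u _
    have hu1 : u = 1 := by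
      have : u ∈ Subgroup.upperCentralSeries G 0 := by rw [hc]; trivial
      rwa [Subgroup.upperCentralSeries_zero, Subgroup.mem_bot] at this
    exact ⟨1, one_pos, by rw [hu1]; simpa using Subgroup.one_mem _⟩
  | succ c ih =>
    intro G instG htf hc Γc hN hFI u hu
    haveI := hN; haveI := hFI
    haveI hnil : Group.IsNilpotent G := ⟨⟨c + 1, hc⟩⟩
    set Z := Subgroup.center G with hZ
    -- the quotient is torsion-free
    have htf' : ∀ (g : G ⧸ Z) (n : ℕ), 0 < n → g ^ n = 1 → g = 1 := by
      intro q n hn hq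
      induction q using QuotientGroup.induction_on with
      | H g =>
        have h1 : g ^ n ∈ Z := by
          rw [← QuotientGroup.eq_one_iff (N := Z)]
          exact hq
        have h2 : g ∈ Subgroup.upperCentralSeries G 1 :=
          myISO' htf hnil 1 g n hn (by rwa [Subgroup.upperCentralSeries_one])
        rw [Subgroup.upperCentralSeries_one] at h2
        rw [QuotientGroup.eq_one_iff]
        exact h2
    -- the quotient has class ≤ c
    have hcq : Subgroup.upperCentralSeries (G ⧸ Z) c = ⊤ := by
      have h := Subgroup.comap_upperCentralSeries_quotient_center (G := G) c
      rw [hc] at h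
      rw [eq_top_iff]
      intro q _
      induction q using QuotientGroup.induction_on with
      | H g =>
        have : g ∈ Subgroup.comap (QuotientGroup.mk' Z) (Subgroup.upperCentralSeries (G ⧸ Z) c) := by
          rw [h]; trivial
        exact this
    -- image subgroup
    set Γq : Subgroup (G ⧸ Z) := Γc.map (QuotientGroup.mk' Z) with hΓq
    have hNq : Γq.Normal := Subgroup.Normal.map hN _ (QuotientGroup.mk'_surjective Z)
    have hFIq : Γq.FiniteIndex := by
      constructor
      intro h0
      exact hFI.index_ne_zero (Nat.eq_zero_of_zero_dvd (h0 ▸ Subgroup.index_map_dvd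
        (QuotientGroup.mk'_surjective Z) (H := Γc)))
    have huq : ((u : G ⧸ Z)) ∈ commutator (G ⧸ Z) := myCommutator_quot Z hu
    obtain ⟨m, hm, hum⟩ := ih (G ⧸ Z) _ htf' hcq Γq hNq hFIq _ huq
    -- pull back
    have : ((u ^ m : G) : G ⧸ Z) ∈ (⁅Γc, Γc⁆ : Subgroup G).map (QuotientGroup.mk' Z) := by
      rw [Subgroup.map_commutator]
      exact hum
    obtain ⟨h, hh, hhu⟩ := Subgroup.mem_map.mp this
    have hzZ : h⁻¹ * u ^ m ∈ Z := by
      rw [← QuotientGroup.eq_one_iff (N := Z)]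
      have : ((h : G) : G ⧸ Z) = ((u ^ m : G) : G ⧸ Z) := hhu
      calc ((h⁻¹ * u ^ m : G) : G ⧸ Z)
          = ((h : G) : G ⧸ Z)⁻¹ * ((u ^ m : G) : G ⧸ Z) := by rfl
        _ = 1 := by rw [this]; group
    set z := h⁻¹ * u ^ m with hz
    have hzC : z ∈ commutator G := by
      have h1 : h ∈ commutator G := by
        rw [commutator_def]
        exact Subgroup.commutator_mono le_top le_top hh
      have h2 : u ^ m ∈ commutator G := pow_mem hu m
      exact Subgroup.mul_mem _ (Subgroup.inv_mem _ h1) h2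
    obtain ⟨M, hM, hzM⟩ := myLemZ Γc hFI hzZ hzC
    refine ⟨m * M, Nat.mul_pos hm hM, ?_⟩
    have hcomm : Commute h z := by
      exact Subgroup.mem_center_iff.mp hzZ h
    have hum' : u ^ m = h * z := by rw [hz]; group
    have : u ^ (m * M) = h ^ M * z ^ M := by
      rw [pow_mul, hum', hcomm.mul_pow]
    rw [this]
    exact Subgroup.mul_mem _ (pow_mem hh M) hzM

end Key

/-- A finitely generated torsion-free nilpotent group possessing a metabelian
subgroup of finite index is itself metabelian. -/
theorem stmt_11 (G : Type*) [Group G] (hfg : Group.FG G)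
    (hnil : Group.IsNilpotent G)
    (htf : ∀ g : G, g ≠ 1 → ¬ IsOfFinOrder g)
    (Γ : Subgroup G) (hfi : Γ.FiniteIndex)
    (hmeta : ∀ x ∈ commutator Γ, ∀ y ∈ commutator Γ, x * y = y * x) :
    ∀ x ∈ commutator G, ∀ y ∈ commutator G, x * y = y * x := by
  have htf' : ∀ (g : G) (n : ℕ), 0 < n → g ^ n = 1 → g = 1 := by
    intro g n hn hg
    by_contra hg1
    exact htf g hg1 (isOfFinOrder_iff_pow_eq_one.mpr ⟨n, hn, hg⟩)
  set Γc := Γ.normalCore with hΓc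
  haveI : Γc.FiniteIndex := Subgroup.finiteIndex_normalCore Γ
  -- elements of ⁅Γc, Γc⁆ commute
  have hcomm : ∀ a ∈ (⁅Γc, Γc⁆ : Subgroup G), ∀ b ∈ (⁅Γc, Γc⁆ : Subgroup G), a * b = b * a := by
    have h2 : Subgroup.map Γ.subtype (commutator Γ) = (⁅Γ, Γ⁆ : Subgroup G) := by
      rw [commutator_def, Subgroup.map_commutator, ← MonoidHom.range_eq_map,
        Subgroup.range_subtype]
    have hle : (⁅Γc, Γc⁆ : Subgroup G) ≤ Subgroup.map Γ.subtype (commutator Γ) := by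
      rw [h2]
      exact Subgroup.commutator_mono (Subgroup.normalCore_le Γ) (Subgroup.normalCore_le Γ)
    intro a ha b hb
    obtain ⟨a', ha', rfl⟩ := Subgroup.mem_map.mp (hle ha)
    obtain ⟨b', hb', rfl⟩ := Subgroup.mem_map.mp (hle hb)
    have := hmeta a' ha' b' hb'
    calc Γ.subtype a' * Γ.subtype b' = Γ.subtype (a' * b') := by rw [map_mul]
      _ = Γ.subtype (b' * a') := by rw [this]
      _ = Γ.subtype b' * Γ.subtype a' := by rw [map_mul]
  have hc : Subgroup.upperCentralSeries G (Group.nilpotencyClass G) = ⊤ :=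
    Subgroup.upperCentralSeries_nilpotencyClass
  intro u hu v hv
  obtain ⟨m, hm, hum⟩ := myKeyT (Group.nilpotencyClass G) G _ htf' hc Γc
    (Subgroup.normalCore_normal Γ) ‹Γc.FiniteIndex› u hu
  obtain ⟨n, hn, hvn⟩ := myKeyT (Group.nilpotencyClass G) G _ htf' hc Γc
    (Subgroup.normalCore_normal Γ) ‹Γc.FiniteIndex› v hv
  have h1 : ⁅u ^ m, v ^ n⁆ = 1 :=
    commutatorElement_eq_one_iff_mul_comm.mpr (hcomm _ hum _ hvn)
  have h2 : ⁅u ^ m, v⁆ = 1 := myLemA htf' hnil (u ^ m) v n hn h1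
  have h3 : ⁅v, u ^ m⁆ = 1 := by
    rw [commutatorElement_eq_one_iff_mul_comm] at h2 ⊢
    exact h2.symm
  have h4 : ⁅v, u⁆ = 1 := myLemA htf' hnil v u m hm h3
  rw [commutatorElement_eq_one_iff_mul_comm] at h4
  exact h4.symm
end

section
/- Hölder's theorem: a group acting freely by orientation-preserving homeomorphisms of the real line embeds into the additive group (ℝ, +); in particular it is abelian. -/
private theorem holder_embed {H : Type*} [CommGroup H] [LinearOrder H] [IsOrderedMonoid H] [MulArchimedean H] :
    ∃ ψ : H →* Multiplicative ℝ, Function.Injective ψ := by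
  classical
  by_cases htriv : ∀ g : H, g = 1
  · exact ⟨1, fun a b _ => (htriv a).trans (htriv b).symm⟩
  push_neg at htriv
  obtain ⟨f₀, hf₀⟩ := htriv
  obtain ⟨f, hf⟩ : ∃ f : H, 1 < f := by
    rcases hf₀.lt_or_gt with h | h
    · exact ⟨f₀⁻¹, one_lt_inv_of_inv h⟩
    · exact ⟨f₀, h⟩
  set S : H → Set ℝ := fun g => {x | ∃ p : ℤ, ∃ q : ℕ, 0 < q ∧ x = p / q ∧ f ^ p ≤ g ^ q} with hS
  have hne : ∀ g, (S g).Nonempty := by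
    intro g
    obtain ⟨n, hn⟩ := MulArchimedean.arch g⁻¹ hf
    refine ⟨(-(n:ℤ)) / ((1:ℕ):ℝ), -(n:ℤ), 1, one_pos, by norm_num, ?_⟩
    rw [pow_one, zpow_neg, zpow_natCast]
    exact inv_le_of_inv_le' hn
  have hbdd : ∀ g, BddAbove (S g) := by
    intro g
    obtain ⟨N, hN⟩ := MulArchimedean.arch g hf
    refine ⟨N, ?_⟩
    rintro x ⟨p, q, hq, rfl, hle⟩
    have h1 : g ^ q ≤ f ^ (N * q) := by
      rw [pow_mul]
      exact pow_le_pow_left' hN q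
    have h2 : f ^ p ≤ f ^ ((N * q : ℕ) : ℤ) := by
      rw [zpow_natCast]
      exact hle.trans h1
    have hp : p ≤ (N * q : ℕ) := (zpow_right_strictMono hf).le_iff_le.mp h2
    rw [div_le_iff₀ (by exact_mod_cast hq)]
    calc (p:ℝ) ≤ ((N*q : ℕ):ℤ) := by exact_mod_cast hp
    _ = N * q := by push_cast; ring
  set ψ₀ : H → ℝ := fun g => sSup (S g) with hψ₀
  have hmem_le : ∀ g x, x ∈ S g → x ≤ ψ₀ g := fun g x hx => le_csSup (hbdd g) hx
  have key : ∀ g h : H, ∀ a ∈ S g, ∀ b ∈ S h, a + b ∈ S (g * h) := by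
    rintro g h a ⟨p, q, hq, rfl, hpq⟩ b ⟨p', q', hq', rfl, hpq'⟩
    refine ⟨p * q' + p' * q, q * q', Nat.mul_pos hq hq', ?_, ?_⟩
    · have hq0 : (q:ℝ) ≠ 0 := by exact_mod_cast hq.ne'
      have hq'0 : (q':ℝ) ≠ 0 := by exact_mod_cast hq'.ne'
      field_simp
      push_cast; ring
    · have h1 : f ^ (p * (q':ℤ)) ≤ g ^ (q * q') := by
        rw [zpow_mul, zpow_natCast, pow_mul]
        exact pow_le_pow_left' hpq q'
      have h2 : f ^ (p' * (q:ℤ)) ≤ h ^ (q' * q) := by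
        rw [zpow_mul, zpow_natCast, pow_mul]
        exact pow_le_pow_left' hpq' q
      calc f ^ (p * q' + p' * q) = f ^ (p * (q':ℤ)) * f ^ (p' * (q:ℤ)) := by
            rw [← zpow_add]
      _ ≤ g ^ (q * q') * h ^ (q' * q) := mul_le_mul' h1 h2
      _ = (g * h) ^ (q * q') := by rw [mul_pow, mul_comm q' q]
  have hadd_ge : ∀ g h : H, ψ₀ g + ψ₀ h ≤ ψ₀ (g * h) := by
    intro g h
    have h1 : ∀ b ∈ S h, ψ₀ g + b ≤ ψ₀ (g * h) := by
      intro b hb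
      have : ψ₀ g ≤ ψ₀ (g * h) - b :=
        csSup_le (hne g) fun a ha => by
          have := hmem_le _ _ (key g h a ha b hb); linarith
      linarith
    have : ψ₀ h ≤ ψ₀ (g * h) - ψ₀ g :=
      csSup_le (hne h) fun b hb => by have := h1 b hb; linarith
    linarith
  have hone : ψ₀ 1 = 0 := by
    apply le_antisymm
    · refine csSup_le (hne 1) ?_
      rintro x ⟨p, q, hq, rfl, hle⟩
      rw [one_pow] at hle
      have hp : p ≤ 0 := by
        have : f ^ p ≤ f ^ (0:ℤ) := by rwa [zpow_zero]
        exact (zpow_right_strictMono hf).le_iff_le.mp this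
      apply div_nonpos_of_nonpos_of_nonneg
      · exact_mod_cast hp
      · positivity
    · exact hmem_le 1 _ ⟨0, 1, one_pos, by norm_num, by simp⟩
  have hinv : ∀ g : H, ψ₀ g⁻¹ = -ψ₀ g := by
    have hle : ∀ g : H, ψ₀ g + ψ₀ g⁻¹ ≤ 0 := by
      intro g
      have := hadd_ge g g⁻¹
      rwa [mul_inv_cancel, hone] at this
    have hge : ∀ g : H, 0 ≤ ψ₀ g + ψ₀ g⁻¹ := by
      intro g
      by_contra hlt
      push_neg at hlt
      have h2 : ψ₀ g < -ψ₀ g⁻¹ := by linarith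
      obtain ⟨r, hr1, hr2⟩ := exists_rat_btwn h2
      have hqd : 0 < r.den := r.pos
      have hnotmem : ((r.num : ℝ) / (r.den : ℝ)) ∉ S g := by
        intro hmem
        have := hmem_le g _ hmem
        rw [← Rat.cast_def] at this
        linarith
      have hnle : ¬ f ^ r.num ≤ g ^ r.den := fun hle =>
        hnotmem ⟨r.num, r.den, hqd, rfl, hle⟩
      have hlt' : g ^ r.den < f ^ r.num := not_le.mp hnle
      have hmem' : ((-r.num : ℤ) : ℝ) / (r.den : ℝ) ∈ S g⁻¹ := by
        refine ⟨-r.num, r.den, hqd, rfl, ?_⟩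
        rw [zpow_neg, inv_pow]
        exact inv_le_inv_iff.mpr hlt'.le
      have h3 := hmem_le _ _ hmem'
      have h4 : ((-r.num : ℤ) : ℝ) / (r.den : ℝ) = -(r:ℝ) := by
        rw [Rat.cast_def]; push_cast; ring
      rw [h4] at h3
      linarith
    intro g
    have := hle g; have := hge g; linarith
  have hadd : ∀ g h : H, ψ₀ (g * h) = ψ₀ g + ψ₀ h := by
    intro g h
    refine le_antisymm ?_ (hadd_ge g h)
    have := hadd_ge (g * h) h⁻¹
    rw [mul_inv_cancel_right, hinv] at this
    linarith
  have hpos : ∀ g : H, 1 < g → 0 < ψ₀ g := by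
    intro g hg
    obtain ⟨n, hn⟩ := MulArchimedean.arch f hg
    have hn0 : 0 < n := by
      rcases Nat.eq_zero_or_pos n with h | h
      · rw [h, pow_zero] at hn; exact absurd hn (not_le.mpr hf)
      · exact h
    have hmem : ((1:ℤ):ℝ) / (n:ℝ) ∈ S g := ⟨1, n, hn0, rfl, by rwa [zpow_one]⟩
    have := hmem_le g _ hmem
    have : (0:ℝ) < ((1:ℤ):ℝ)/(n:ℝ) := by
      norm_num
      exact_mod_cast hn0
    linarith [hmem_le g _ hmem]
  have hinj : ∀ g : H, ψ₀ g = 0 → g = 1 := by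
    intro g hg
    by_contra hne1
    rcases (Ne.lt_or_gt hne1) with h | h
    · have h1 : 1 < g⁻¹ := one_lt_inv_of_inv h
      have := hpos g⁻¹ h1
      rw [hinv, hg] at this
      norm_num at this
    · have := hpos g h
      rw [hg] at this
      exact lt_irrefl _ this
  refine ⟨MonoidHom.mk' (fun g => Multiplicative.ofAdd (ψ₀ g)) ?_, ?_⟩
  · intro a b
    simp only [hadd a b]
    rfl
  · intro a b hab
    have h1 : ψ₀ a = ψ₀ b := by
      simpa using congrArg Multiplicative.toAdd hab
    have h2 : ψ₀ (a * b⁻¹) = 0 := by rw [hadd, hinv, h1]; ring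
    have := hinj _ h2
    rw [mul_inv_eq_one] at this
    exact this


/-- Hölder's theorem: a group acting freely on `ℝ` by orientation-preserving
homeomorphisms (order-isomorphisms of `ℝ`) embeds into `(ℝ, +)`; in particular
it is abelian. -/

theorem stmt_18 (G : Type*) [Group G] (φ : G →* (ℝ ≃o ℝ))
    (hfree : ∀ g : G, g ≠ 1 → ∀ x : ℝ, φ g x ≠ x) :
    (∃ ψ : G →* Multiplicative ℝ, Function.Injective ψ) ∧
    (∀ a b : G, a * b = b * a) := by
  classical
  have hmul : ∀ (g h : G) (x : ℝ), φ (g * h) x = φ g (φ h x) := fun g h x => by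
    rw [map_mul]; rfl
  have hone : ∀ x : ℝ, φ 1 x = x := fun x => by rw [map_one]; rfl
  have hfix : ∀ (g : G) (x : ℝ), φ g x = x → g = 1 := by
    intro g x h
    by_contra hg
    exact hfree g hg x h
  have hsign : ∀ g : G, (∀ x, φ g x ≤ x) ∨ (∀ x, x ≤ φ g x) := by
    intro g
    by_contra hc
    push_neg at hc
    obtain ⟨⟨x, hx⟩, ⟨y, hy⟩⟩ := hc
    have hcont : Continuous fun t => φ g t - t := (φ g).continuous.sub continuous_id
    have hzero : ∃ z : ℝ, φ g z - z = 0 := by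
      rcases le_total x y with hxy | hxy
      · have h0 : (0:ℝ) ∈ Set.Icc (φ g y - y) (φ g x - x) := ⟨by linarith, by linarith⟩
        obtain ⟨z, _, hz⟩ := intermediate_value_Icc' hxy hcont.continuousOn h0
        exact ⟨z, hz⟩
      · have h0 : (0:ℝ) ∈ Set.Icc (φ g y - y) (φ g x - x) := ⟨by linarith, by linarith⟩
        obtain ⟨z, _, hz⟩ := intermediate_value_Icc hxy hcont.continuousOn h0
        exact ⟨z, hz⟩
    obtain ⟨z, hz⟩ := hzero
    have : g = 1 := hfix g z (by linarith)
    rw [this, hone] at hx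
    exact lt_irrefl _ hx
  -- pointwise comparison from comparison at 0
  have hpw : ∀ g h : G, φ g 0 ≤ φ h 0 → ∀ x, φ g x ≤ φ h x := by
    intro g h hle x
    have h0 : φ (h⁻¹ * g) 0 ≤ 0 := by
      rw [hmul]
      calc φ h⁻¹ (φ g 0) ≤ φ h⁻¹ (φ h 0) := (φ h⁻¹).monotone hle
      _ = φ (h⁻¹ * h) 0 := (hmul _ _ _).symm
      _ = 0 := by rw [inv_mul_cancel, hone]
    have hkey : ∀ t, φ (h⁻¹ * g) t ≤ t := by
      rcases hsign (h⁻¹ * g) with hs | hs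
      · exact hs
      · have h1 : h⁻¹ * g = 1 := hfix _ 0 (le_antisymm h0 (hs 0))
        intro t; rw [h1, hone]
    have := hkey x
    rw [hmul] at this
    calc φ g x = φ h (φ h⁻¹ (φ g x)) := by rw [← hmul, mul_inv_cancel, hone]
    _ ≤ φ h x := (φ h).monotone this
  have hinj0 : ∀ g h : G, φ g 0 = φ h 0 → g = h := by
    intro g h he
    have : φ (h⁻¹ * g) 0 = 0 := by
      rw [hmul, he, ← hmul, inv_mul_cancel, hone]
    exact (inv_mul_eq_one.mp (hfix (h⁻¹ * g) 0 this)).symm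
  have hpws : ∀ g h : G, φ g 0 < φ h 0 → ∀ x, φ g x < φ h x := by
    intro g h hlt x
    refine lt_of_le_of_ne (hpw g h hlt.le x) fun heq => ?_
    have : g = h := by
      have h0 : φ (h⁻¹ * g) x = x := by
        rw [hmul, heq, ← hmul, inv_mul_cancel, hone]
      exact (inv_mul_eq_one.mp (hfix (h⁻¹ * g) x h0)).symm
    rw [this] at hlt
    exact lt_irrefl _ hlt
  have hF3 : ∀ a a' b b' : G, φ a 0 ≤ φ a' 0 → φ b 0 ≤ φ b' 0 →
      φ (a * b) 0 ≤ φ (a' * b') 0 := by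
    intro a a' b b' ha hb
    rw [hmul, hmul]
    calc φ a (φ b 0) ≤ φ a (φ b' 0) := (φ a).monotone hb
    _ ≤ φ a' (φ b' 0) := hpw a a' ha _
  have hF3s : ∀ a a' b b' : G, φ a 0 ≤ φ a' 0 → φ b 0 < φ b' 0 →
      φ (a * b) 0 < φ (a' * b') 0 := by
    intro a a' b b' ha hb
    rw [hmul, hmul]
    calc φ a (φ b 0) < φ a (φ b' 0) := (φ a).strictMono hb
    _ ≤ φ a' (φ b' 0) := hpw a a' ha _
  have hinvle : ∀ a b : G, φ a 0 ≤ φ b 0 → φ b⁻¹ 0 ≤ φ a⁻¹ 0 := by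
    intro a b h
    have h2 : φ a (φ b⁻¹ 0) ≤ 0 := by
      calc φ a (φ b⁻¹ 0) ≤ φ b (φ b⁻¹ 0) := hpw a b h _
      _ = 0 := by rw [← hmul, mul_inv_cancel, hone]
    calc φ b⁻¹ 0 = φ a⁻¹ (φ a (φ b⁻¹ 0)) := by rw [← hmul, inv_mul_cancel, hone]
    _ ≤ φ a⁻¹ 0 := (φ a⁻¹).monotone h2
  -- unboundedness of orbits of positive elements
  have hU : ∀ u : G, (∀ x, x < φ u x) → ∀ y : ℝ, ∃ n : ℕ, y < φ (u ^ n) 0 := by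
    intro u hu y
    by_contra hb
    push_neg at hb
    set a : ℕ → ℝ := fun n => φ (u ^ n) 0 with ha
    have hsucc : ∀ n, a (n + 1) = φ u (a n) := by
      intro n
      show φ (u ^ (n+1)) 0 = φ u (φ (u ^ n) 0)
      rw [pow_succ', hmul]
    have hmono : Monotone a :=
      (strictMono_nat_of_lt_succ fun n => by rw [hsucc]; exact hu (a n)).monotone
    have hbdd : BddAbove (Set.range a) := ⟨y, by rintro t ⟨n, rfl⟩; exact hb n⟩
    have hlim : Filter.Tendsto a Filter.atTop (nhds (⨆ n, a n)) :=
      tendsto_atTop_ciSup hmono hbdd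
    have hlim2 : Filter.Tendsto (fun n => φ u (a n)) Filter.atTop (nhds (φ u (⨆ n, a n))) :=
      ((φ u).continuous.tendsto _).comp hlim
    have hlim3 : Filter.Tendsto (fun n => a (n + 1)) Filter.atTop (nhds (⨆ n, a n)) :=
      hlim.comp (Filter.tendsto_add_atTop_nat 1)
    have heq : φ u (⨆ n, a n) = ⨆ n, a n := by
      refine tendsto_nhds_unique ?_ hlim3
      convert hlim2 using 1
      funext n
      exact hsucc n
    exact (hu (⨆ n, a n)).ne' heq
  have harch : ∀ ε g : G, 0 < φ ε 0 → ∃ n : ℕ, φ g 0 < φ (ε ^ n) 0 := by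
    intro ε g hε
    have hεpt : ∀ x, x < φ ε x := by
      intro x
      have := hpws 1 ε (by rwa [hone]) x
      rwa [hone] at this
    exact hU ε hεpt (φ g 0)
  have hzpow : ∀ ε g : G, 0 < φ ε 0 →
      ∃ p : ℤ, φ (ε ^ p) 0 ≤ φ g 0 ∧ φ g 0 < φ (ε ^ (p + 1)) 0 := by
    intro ε g hε
    obtain ⟨n, hn⟩ := harch ε g hε
    obtain ⟨m, hm⟩ := harch ε g⁻¹ hε
    have hlow : φ (ε ^ (-(m:ℤ))) 0 ≤ φ g 0 := by
      have h1 : φ ((ε ^ m)⁻¹) 0 ≤ φ g⁻¹⁻¹ 0 := hinvle g⁻¹ (ε ^ m) hm.le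
      rw [inv_inv] at h1
      rw [zpow_neg, zpow_natCast]
      exact h1
    have hT : ∃ j : ℕ, φ (ε ^ ((n:ℤ) - j)) 0 ≤ φ g 0 := by
      refine ⟨n + m, ?_⟩
      have : (n:ℤ) - (↑(n + m)) = -(m:ℤ) := by push_cast; ring
      rw [this]
      exact hlow
    set j₀ := Nat.find hT with hj₀
    have hspec : φ (ε ^ ((n:ℤ) - j₀)) 0 ≤ φ g 0 := Nat.find_spec hT
    have hj0pos : j₀ ≠ 0 := by
      intro h0
      rw [h0] at hspec
      simp only [Nat.cast_zero, sub_zero] at hspec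
      rw [zpow_natCast] at hspec
      exact absurd hn (not_lt.mpr hspec)
    refine ⟨(n:ℤ) - j₀, hspec, ?_⟩
    have hmin := Nat.find_min hT (m := j₀ - 1) (by omega)
    have hcast : (n:ℤ) - (↑(j₀ - 1) : ℤ) = (n:ℤ) - j₀ + 1 := by
      have : (↑(j₀ - 1) : ℤ) = (j₀ : ℤ) - 1 := by
        have : 1 ≤ j₀ := Nat.one_le_iff_ne_zero.mpr hj0pos
        push_cast [Nat.cast_sub this]
        ring
      rw [this]; ring
    rw [hcast] at hmin
    exact not_le.mp hmin
  -- the key contradiction machine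
  have key : ∀ a b : G, 0 < φ (a⁻¹ * b⁻¹ * a * b) 0 → False := by
    intro a b hpos
    set c := a⁻¹ * b⁻¹ * a * b with hc
    by_cases hminx : ∃ m : G, 0 < φ m 0 ∧ ∀ u : G, 0 < φ u 0 → φ m 0 ≤ φ u 0
    · obtain ⟨m, hm, hmle⟩ := hminx
      have hall : ∀ g : G, ∃ p : ℤ, g = m ^ p := by
        intro g
        obtain ⟨p, hp1, hp2⟩ := hzpow m g hm
        refine ⟨p, ?_⟩
        have h1 : 0 ≤ φ (m ^ (-p) * g) 0 := by
          have h2 := (φ (m ^ (-p))).monotone hp1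
          rw [← hmul, ← hmul, ← zpow_add] at h2
          simp only [neg_add_cancel, zpow_zero] at h2
          rw [hone] at h2
          exact h2
        have h2 : φ (m ^ (-p) * g) 0 < φ m 0 := by
          have h3 := (φ (m ^ (-p))).strictMono hp2
          rw [← hmul, ← hmul, ← zpow_add] at h3
          have he : -p + (p + 1) = (1:ℤ) := by ring
          rw [he, zpow_one] at h3
          exact h3
        have h3 : φ (m ^ (-p) * g) 0 = 0 := by
          rcases h1.eq_or_lt with h | h
          · exact h.symm
          · exact absurd h2 (not_lt.mpr (hmle _ h))
        have h4 : m ^ (-p) * g = 1 := hfix _ 0 h3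
        rw [zpow_neg] at h4
        exact (inv_mul_eq_one.mp h4).symm
      obtain ⟨i, hi⟩ := hall a
      obtain ⟨j, hj⟩ := hall b
      have hc1 : c = 1 := by
        rw [hc, hi, hj]
        group
      rw [hc1, hone] at hpos
      exact lt_irrefl _ hpos
    · push_neg at hminx
      obtain ⟨δ, hδpos, hδlt⟩ := hminx c hpos
      set ε := if φ δ 0 ≤ φ (δ⁻¹ * c) 0 then δ else δ⁻¹ * c with hε
      have hεprop : 0 < φ ε 0 ∧ φ (ε * ε) 0 ≤ φ c 0 := by
        rw [hε]
        split_ifs with h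
        · refine ⟨hδpos, ?_⟩
          have := hF3 δ δ δ (δ⁻¹ * c) le_rfl h
          rwa [mul_inv_cancel_left] at this
        · have h' : φ (δ⁻¹ * c) 0 ≤ φ δ 0 := (not_le.mp h).le
          have hpos' : 0 < φ (δ⁻¹ * c) 0 := by
            rw [hmul]
            have h2 := (φ δ⁻¹).strictMono hδlt
            rw [← hmul, inv_mul_cancel, hone] at h2
            exact h2
          refine ⟨hpos', ?_⟩
          have := hF3 (δ⁻¹ * c) δ (δ⁻¹ * c) (δ⁻¹ * c) h' le_rfl
          rwa [mul_inv_cancel_left] at this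
      obtain ⟨hep, he2⟩ := hεprop
      obtain ⟨p, hp1, hp2⟩ := hzpow ε a hep
      obtain ⟨q, hq1, hq2⟩ := hzpow ε b hep
      have hainv : φ a⁻¹ 0 ≤ φ (ε ^ (-p)) 0 := by
        have := hinvle (ε ^ p) a hp1
        rwa [← zpow_neg] at this
      have hbinv : φ b⁻¹ 0 ≤ φ (ε ^ (-q)) 0 := by
        have := hinvle (ε ^ q) b hq1
        rwa [← zpow_neg] at this
      have s1 : φ (a⁻¹ * b⁻¹) 0 ≤ φ (ε ^ (-p) * ε ^ (-q)) 0 := hF3 _ _ _ _ hainv hbinv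
      have s2 : φ (a⁻¹ * b⁻¹ * a) 0 ≤ φ (ε ^ (-p) * ε ^ (-q) * ε ^ (p + 1)) 0 :=
        hF3 _ _ _ _ s1 hp2.le
      have s3 : φ (a⁻¹ * b⁻¹ * a * b) 0 < φ (ε ^ (-p) * ε ^ (-q) * ε ^ (p + 1) * ε ^ (q + 1)) 0 :=
        hF3s _ _ _ _ s2 hq2
      have hsimp : ε ^ (-p) * ε ^ (-q) * ε ^ (p + 1) * ε ^ (q + 1) = ε * ε := by
        rw [← zpow_add, ← zpow_add, ← zpow_add]
        have : -p + -q + (p + 1) + (q + 1) = (2:ℤ) := by ring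
        rw [this]
        rw [zpow_two]
      rw [hsimp] at s3
      exact absurd he2 (not_le.mpr s3)
  have hcomm : ∀ a b : G, a * b = b * a := by
    intro a b
    rcases lt_trichotomy (φ (a⁻¹ * b⁻¹ * a * b) 0) 0 with h | h | h
    · exfalso
      apply key b a
      have hrel : b⁻¹ * a⁻¹ * b * a = (a⁻¹ * b⁻¹ * a * b)⁻¹ := by group
      rw [hrel]
      set d := a⁻¹ * b⁻¹ * a * b with hd
      have h0 : φ d (φ d⁻¹ 0) = 0 := by rw [← hmul, mul_inv_cancel, hone]
      have h1 : φ d 0 < φ d (φ d⁻¹ 0) := by rw [h0]; exact h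
      exact (φ d).strictMono.lt_iff_lt.mp h1
    · have h1 : a⁻¹ * b⁻¹ * a * b = 1 := hfix _ 0 h
      have h2 : b * a * (a⁻¹ * b⁻¹ * a * b) = b * a * 1 := by rw [h1]
      simp only [mul_assoc, inv_mul_cancel_left, mul_inv_cancel_left, mul_one] at h2
      exact h2
    · exact (key a b h).elim

  refine ⟨?_, hcomm⟩
  letI cg : CommGroup G := { (inferInstance : Group G) with mul_comm := hcomm }
  letI lo : LinearOrder G := LinearOrder.lift' (fun g : G => φ g 0) (fun g h he => hinj0 g h he)
  letI log : IsOrderedMonoid G :=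
    { mul_le_mul_left := fun a b hab c => by
        rw [mul_comm a c, mul_comm b c]
        have hab' : φ a 0 ≤ φ b 0 := hab
        show φ (c * a) 0 ≤ φ (c * b) 0
        rw [hmul, hmul]
        exact (φ c).monotone hab' }
  letI : MulArchimedean G := ⟨by
    intro x y hy
    have hy0 : 0 < φ y 0 := by
      have h1 : φ 1 0 ≤ φ y 0 := hy.le
      have h2 : φ 1 0 ≠ φ y 0 := fun he => hy.ne (hinj0 1 y he)
      rw [hone] at h1 h2
      exact lt_of_le_of_ne h1 h2
    obtain ⟨n, hn⟩ := harch y x hy0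
    exact ⟨n, show φ x 0 ≤ φ (y ^ n) 0 from hn.le⟩⟩
  obtain ⟨ψ, hψ⟩ := holder_embed (H := G)
  exact ⟨ψ, hψ⟩
end
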